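/- If L_u is a symmetric positive semidefinite real n×n matrix with L_u·𝟙 = 0 and rank n−1 (i.e., the Laplacian of a connected undirected graph), and L̄_u = Q L_u Qᵀ where Q has rows forming an orthonormal basis of 𝟙^⊥, then Σ = (1/2) L̄_u^{-1} solves the Lyapunov equation L̄_u Σ + Σ L̄_u ᵀ = I_{n-1}, and consequently X = 2QᵀΣQ equals the Moore–Penrose pseudoinverse L_u⁺. -/

import Mathlib

open Matrix

/-- The four Moore–Penrose conditions characterizing the pseudoinverse. -/
def IsMoorePenrose {m : Type*} [Fintype m] [DecidableEq m]
    (A B : Matrix m m ℝ) : Prop :=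
  A * B * A = A ∧ B * A * B = B ∧ (A * B)ᵀ = A * B ∧ (B * A)ᵀ = B * A

theorem symm_laplacian_lyapunov_pinv {n : ℕ} (hn : 0 < n)
    (Lu : Matrix (Fin n) (Fin n) ℝ) (hsym : Luᵀ = Lu) (hpsd : Lu.PosSemidef)
    (hrow : Lu *ᵥ (1 : Fin n → ℝ) = 0) (hrank : Lu.rank = n - 1)
    (Q : Matrix (Fin (n - 1)) (Fin n) ℝ)
    (hQ1 : Q *ᵥ (1 : Fin n → ℝ) = 0) (hQQ : Q * Qᵀ = 1)
    (hQP : Qᵀ * Q = 1 - (n : ℝ)⁻¹ • Matrix.of (fun _ _ => (1 : ℝ))) :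
    (Q * Lu * Qᵀ) * ((1 / 2 : ℝ) • (Q * Lu * Qᵀ)⁻¹) +
      ((1 / 2 : ℝ) • (Q * Lu * Qᵀ)⁻¹) * (Q * Lu * Qᵀ)ᵀ = 1 ∧
    IsMoorePenrose Lu ((2 : ℝ) • (Qᵀ * ((1 / 2 : ℝ) • (Q * Lu * Qᵀ)⁻¹) * Q)) := by
  set J : Matrix (Fin n) (Fin n) ℝ := Matrix.of (fun _ _ => (1 : ℝ)) with hJ
  -- Lu * J = 0
  have hLJ : Lu * J = 0 := by
    ext i j
    simpa [Matrix.mul_apply, Matrix.mulVec, dotProduct, hJ] using congrFun hrow i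
  have hJL : J * Lu = 0 := by
    have := congrArg Matrix.transpose hLJ
    rw [Matrix.transpose_mul, hsym] at this
    have hJt : Jᵀ = J := by ext i j; rfl
    rwa [hJt, Matrix.transpose_zero] at this
  -- P absorbs Lu
  have hLP : Lu * (Qᵀ * Q) = Lu := by
    rw [hQP, Matrix.mul_sub, Matrix.mul_one, Matrix.mul_smul, hLJ, smul_zero, sub_zero]
  have hPL : (Qᵀ * Q) * Lu = Lu := by
    rw [hQP, Matrix.sub_mul, Matrix.one_mul, Matrix.smul_mul, hJL, smul_zero, sub_zero]
  set M : Matrix (Fin (n-1)) (Fin (n-1)) ℝ := Q * Lu * Qᵀ with hM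
  have hMsym : Mᵀ = M := by
    rw [hM, Matrix.transpose_mul, Matrix.transpose_mul, Matrix.transpose_transpose, hsym,
      Matrix.mul_assoc]
  -- kernel of Lu is span of 1
  have hker : LinearMap.ker Lu.mulVecLin = Submodule.span ℝ {(1 : Fin n → ℝ)} := by
    have hone : (1 : Fin n → ℝ) ≠ 0 := by
      intro h
      have := congrFun h ⟨0, hn⟩
      norm_num at this
    have hle : Submodule.span ℝ {(1 : Fin n → ℝ)} ≤ LinearMap.ker Lu.mulVecLin := by
      rw [Submodule.span_singleton_le_iff_mem, LinearMap.mem_ker, Matrix.mulVecLin_apply]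
      exact hrow
    have hrn := Lu.mulVecLin.finrank_range_add_finrank_ker
    have hfr : Module.finrank ℝ (Fin n → ℝ) = n := by simp
    rw [hfr] at hrn
    have hrk : Module.finrank ℝ (LinearMap.range Lu.mulVecLin) = n - 1 := hrank
    have hkd : Module.finrank ℝ (LinearMap.ker Lu.mulVecLin) = 1 := by omega
    symm
    apply Submodule.eq_of_le_of_finrank_eq hle
    rw [hkd, finrank_span_singleton hone]
  -- M is positive definite
  have hMpd : M.PosDef := by
    rw [Matrix.posDef_iff_dotProduct_mulVec]
    constructor
    · rw [Matrix.IsHermitian, Matrix.conjTranspose_eq_transpose_of_trivial, hMsym]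
    · intro x hx
      have hv : M *ᵥ x = Q *ᵥ (Lu *ᵥ (Qᵀ *ᵥ x)) := by
        rw [hM, ← Matrix.mulVec_mulVec, ← Matrix.mulVec_mulVec]
      set v : Fin n → ℝ := Qᵀ *ᵥ x with hvdef
      have hdot : star x ⬝ᵥ M *ᵥ x = star v ⬝ᵥ Lu *ᵥ v := by
        rw [hv, Matrix.dotProduct_mulVec, star_trivial, star_trivial,
          ← Matrix.mulVec_transpose, hvdef]
      rw [hdot]
      rcases lt_or_eq_of_le (hpsd.dotProduct_mulVec_nonneg v) with h | h
      · exact h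
      · exfalso
        have hv0 : Lu *ᵥ v = 0 := (hpsd.dotProduct_mulVec_zero_iff v).mp h.symm
        have hvmem : v ∈ Submodule.span ℝ {(1 : Fin n → ℝ)} := by
          rw [← hker]; exact hv0
        obtain ⟨c, hc⟩ := Submodule.mem_span_singleton.mp hvmem
        have hx0 : x = 0 := by
          have : (Q * Qᵀ) *ᵥ x = Q *ᵥ v := by rw [← Matrix.mulVec_mulVec, hvdef]
          rw [hQQ, Matrix.one_mulVec, ← hc, Matrix.mulVec_smul, hQ1, smul_zero] at this
          exact this
        exact hx hx0
  have hMunit : IsUnit M := hMpd.isUnit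
  have hMinv : M * M⁻¹ = 1 := Matrix.mul_nonsing_inv M ((Matrix.isUnit_iff_isUnit_det M).mp hMunit)
  have hMinv' : M⁻¹ * M = 1 := Matrix.nonsing_inv_mul M ((Matrix.isUnit_iff_isUnit_det M).mp hMunit)
  -- intertwining
  have hQL : M * Q = Q * Lu := by
    simp only [hM, Matrix.mul_assoc]
    rw [hLP]
  have hLQ : Qᵀ * M = Lu * Qᵀ := by
    rw [hM]
    simp only [← Matrix.mul_assoc]
    rw [hPL]
  constructor
  · rw [hMsym, Matrix.mul_smul, Matrix.smul_mul, hMinv, hMinv', ← add_smul,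
      show ((1:ℝ)/2 + 1/2) = 1 by norm_num, one_smul]
  · have hB : (2 : ℝ) • (Qᵀ * ((1 / 2 : ℝ) • M⁻¹) * Q) = Qᵀ * M⁻¹ * Q := by
      rw [Matrix.mul_smul, Matrix.smul_mul, smul_smul]
      norm_num
    rw [hB]
    have hLB : Lu * (Qᵀ * M⁻¹ * Q) = Qᵀ * Q := by
      have : Lu * (Qᵀ * M⁻¹ * Q) = Lu * Qᵀ * M⁻¹ * Q := by
        simp only [Matrix.mul_assoc]
      rw [this, ← hLQ, Matrix.mul_assoc Qᵀ M M⁻¹, hMinv, Matrix.mul_one]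
    have hBL : (Qᵀ * M⁻¹ * Q) * Lu = Qᵀ * Q := by
      have : Qᵀ * M⁻¹ * Q * Lu = Qᵀ * (M⁻¹ * (Q * Lu)) := by
        simp only [Matrix.mul_assoc]
      rw [this, ← hQL, ← Matrix.mul_assoc M⁻¹ M Q, hMinv', Matrix.one_mul]
    refine ⟨?_, ?_, ?_, ?_⟩
    · rw [hLB, Matrix.mul_assoc, ← Matrix.mul_assoc Qᵀ Q, hPL]
    · rw [Matrix.mul_assoc (Qᵀ * M⁻¹ * Q) Lu, hLB,
        ← Matrix.mul_assoc (Qᵀ * M⁻¹ * Q) Qᵀ Q, Matrix.mul_assoc (Qᵀ * M⁻¹) Q Qᵀ,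
        hQQ, Matrix.mul_one]
    · rw [hLB, Matrix.transpose_mul, Matrix.transpose_transpose]
    · rw [hBL, Matrix.transpose_mul, Matrix.transpose_transpose]
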